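/- Let Π(l, w) = { d ∈ ℝ_{≥0}^{n×n} : ∑_j d_{ij} = l_i, ∑_i d_{ij} = w_j } with l, w ≥ 0 and ∑_i l_i = ∑_j w_j = N > 0. For γ > 0 and costs T ∈ ℝ^{n×n}, the minimum over d ∈ Π(l,w) of ∑_{ij} d_{ij} T_{ij} + (1/γ) ∑_{ij} d_{ij} ln d_{ij} equals the maximum over λ^l, λ^w ∈ ℝ^n of −φ(λ^l, λ^w), where φ(λ^l, λ^w) = (N/γ) ln( (1/N) ∑_{ij} exp(−γ(T_{ij} + λ^l_i + λ^w_j)) ) + ∑_i λ^l_i l_i + ∑_j λ^w_j w_j. -/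

import Mathlib

open Real

open Finset Filter

namespace OTDual

noncomputable def psi (x : ℝ) : ℝ := x * Real.log x

noncomputable def obj {n : ℕ} (γ : ℝ) (T d : Fin n → Fin n → ℝ) : ℝ :=
  ∑ i, ∑ j, d i j * T i j + (1 / γ) * ∑ i, ∑ j, d i j * Real.log (d i j)

def rr {n : ℕ} (i i' : Fin n) : Fin n → ℝ := fun a => if a = i then 1 else if a = i' then -1 else 0

lemma ent_lb {x y : ℝ} (hx : 0 ≤ x) (hy : 0 < y) :
    x - y ≤ x * Real.log x - x * Real.log y := by
  rcases eq_or_lt_of_le hx with h | h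
  · simp [← h]; positivity
  · have h1 : Real.log (y / x) ≤ y / x - 1 := Real.log_le_sub_one_of_pos (by positivity)
    rw [Real.log_div (ne_of_gt hy) (ne_of_gt h)] at h1
    have := mul_le_mul_of_nonneg_left h1 (le_of_lt h)
    have hxx : x * (y / x - 1) = y - x := by field_simp
    nlinarith

lemma psi_incr_bound {x t : ℝ} (hx : 0 ≤ x) (ht : 0 < t) :
    psi (x + t) - psi x ≤ t * (Real.log (x + t) + 1) := by
  unfold psi
  rcases eq_or_lt_of_le hx with h | h
  · rw [← h]; simp; nlinarith
  · have h1 : Real.log ((x + t) / x) ≤ (x + t) / x - 1 := Real.log_le_sub_one_of_pos (by positivity)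
    rw [Real.log_div (by positivity) (ne_of_gt h)] at h1
    have h2 : x * (Real.log (x + t) - Real.log x) ≤ x * ((x + t) / x - 1) :=
      mul_le_mul_of_nonneg_left h1 (le_of_lt h)
    have h3 : x * ((x + t) / x - 1) = t := by field_simp; ring
    nlinarith

lemma psi_decr_bound {c t : ℝ} (hc : 0 < c) (ht : 0 < t) (htc : t < c) :
    psi (c - t) - psi c ≤ t * |Real.log c| := by
  unfold psi
  have h0 : (0:ℝ) < c - t := by linarith
  have h1 : Real.log ((c - t) / c) ≤ 0 := by
    apply Real.log_nonpos (by positivity)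
    rw [div_le_one hc]; linarith
  rw [Real.log_div (ne_of_gt h0) (ne_of_gt hc)] at h1
  have h2 : (c - t) * (Real.log (c - t) - Real.log c) ≤ 0 :=
    mul_nonpos_of_nonneg_of_nonpos (le_of_lt h0) h1
  have h3 : -Real.log c ≤ |Real.log c| := neg_le_abs _
  nlinarith

lemma sum_rs {n : ℕ} {i i' : Fin n} (hii : i ≠ i') (X : Fin n → ℝ) :
    ∑ a, rr i i' a * X a = X i - X i' := by
  have h : ∀ a, rr i i' a * X a
      = (if a = i then X a else 0) + (if a = i' then -X a else 0) := by
    intro a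
    unfold rr
    by_cases h1 : a = i <;> by_cases h2 : a = i' <;> simp_all
  simp only [h, Finset.sum_add_distrib, Finset.sum_ite_eq', Finset.mem_univ, if_true]
  ring

lemma sum_rs_zero {n : ℕ} {i i' : Fin n} (hii : i ≠ i') : ∑ a, rr i i' a = 0 := by
  simpa using sum_rs hii (fun _ => (1:ℝ))

noncomputable def pert {n : ℕ} (d : Fin n → Fin n → ℝ) (t : ℝ) (i i' j j' : Fin n) :
    Fin n → Fin n → ℝ := fun a b => d a b + t * (rr i i' a * rr j j' b)

lemma rr_fst {n : ℕ} (i i' : Fin n) : rr i i' i = 1 := by simp [rr]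
lemma rr_snd {n : ℕ} {i i' : Fin n} (h : i ≠ i') : rr i i' i' = -1 := by
  simp [rr, Ne.symm h]
lemma rr_other {n : ℕ} {i i' a : Fin n} (h1 : a ≠ i) (h2 : a ≠ i') : rr i i' a = 0 := by
  simp [rr, h1, h2]

lemma pert_row {n : ℕ} (d : Fin n → Fin n → ℝ) (t : ℝ) {i i' j j' : Fin n}
    (hjj : j ≠ j') (a : Fin n) : ∑ b, pert d t i i' j j' a b = ∑ b, d a b := by
  unfold pert
  rw [Finset.sum_add_distrib]
  have : ∑ b, t * (rr i i' a * rr j j' b) = t * rr i i' a * ∑ b, rr j j' b := by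
    rw [Finset.mul_sum]; apply Finset.sum_congr rfl; intros; ring
  rw [this, sum_rs_zero hjj]; ring

lemma pert_col {n : ℕ} (d : Fin n → Fin n → ℝ) (t : ℝ) {i i' j j' : Fin n}
    (hii : i ≠ i') (b : Fin n) : ∑ a, pert d t i i' j j' a b = ∑ a, d a b := by
  unfold pert
  rw [Finset.sum_add_distrib]
  have : ∑ a, t * (rr i i' a * rr j j' b) = t * rr j j' b * ∑ a, rr i i' a := by
    rw [Finset.mul_sum]; apply Finset.sum_congr rfl; intros; ring
  rw [this, sum_rs_zero hii]; ring

lemma pert_apply_off {n : ℕ} (d : Fin n → Fin n → ℝ) (t : ℝ) {i i' j j' : Fin n}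
    (a b : Fin n) (h : (a ≠ i ∧ a ≠ i') ∨ (b ≠ j ∧ b ≠ j')) :
    pert d t i i' j j' a b = d a b := by
  unfold pert
  rcases h with ⟨h1, h2⟩ | ⟨h1, h2⟩
  · rw [rr_other h1 h2]; ring
  · rw [rr_other h1 h2]; ring

lemma obj_pert {n : ℕ} (γ : ℝ) (T d : Fin n → Fin n → ℝ) {i i' j j' : Fin n}
    (hii : i ≠ i') (hjj : j ≠ j') (t : ℝ) :
    obj γ T (pert d t i i' j j') = obj γ T d
      + t * (T i j + T i' j' - T i j' - T i' j)
      + (1 / γ) * ((psi (d i j + t) - psi (d i j)) + (psi (d i' j' + t) - psi (d i' j'))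
        + (psi (d i j' - t) - psi (d i j')) + (psi (d i' j - t) - psi (d i' j))) := by
  have hlin : ∑ a, ∑ b, pert d t i i' j j' a b * T a b
      = ∑ a, ∑ b, d a b * T a b + t * (T i j + T i' j' - T i j' - T i' j) := by
    have h1 : ∀ a, ∑ b, pert d t i i' j j' a b * T a b
        = ∑ b, d a b * T a b + t * rr i i' a * (T a j - T a j') := by
      intro a
      unfold pert
      have : ∀ b, (d a b + t * (rr i i' a * rr j j' b)) * T a b
          = d a b * T a b + (t * rr i i' a) * (rr j j' b * T a b) := by intro b; ring
      simp only [this, Finset.sum_add_distrib, ← Finset.mul_sum, sum_rs hjj (fun b => T a b)]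
    simp only [h1, Finset.sum_add_distrib]
    congr 1
    have : ∀ a, t * rr i i' a * (T a j - T a j') = t * (rr i i' a * (T a j - T a j')) := by
      intro a; ring
    simp only [this, ← Finset.mul_sum, sum_rs hii (fun a => T a j - T a j')]
    ring
  have hent : ∑ a, ∑ b, pert d t i i' j j' a b * Real.log (pert d t i i' j j' a b)
      = ∑ a, ∑ b, d a b * Real.log (d a b)
        + ((psi (d i j + t) - psi (d i j)) + (psi (d i' j' + t) - psi (d i' j'))
          + (psi (d i j' - t) - psi (d i j')) + (psi (d i' j - t) - psi (d i' j))) := by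
    set G : Fin n → Fin n → ℝ := fun a b => psi (pert d t i i' j j' a b) - psi (d a b) with hGdef
    have hsplit : ∀ a b, pert d t i i' j j' a b * Real.log (pert d t i i' j j' a b)
        = d a b * Real.log (d a b) + G a b := by
      intro a b; simp only [hGdef, psi]; ring
    simp only [hsplit, Finset.sum_add_distrib]
    congr 1
    have hGout : ∀ a, a ≠ i → a ≠ i' → ∀ b, G a b = 0 := by
      intro a h1 h2 b
      simp only [hGdef, pert_apply_off d t a b (Or.inl ⟨h1, h2⟩), sub_self]
    have hGoutb : ∀ a b, b ≠ j → b ≠ j' → G a b = 0 := by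
      intro a b h1 h2
      simp only [hGdef, pert_apply_off d t a b (Or.inr ⟨h1, h2⟩), sub_self]
    have houter : ∑ a, ∑ b, G a b = (∑ b, G i b) + (∑ b, G i' b) := by
      rw [← Finset.sum_subset (Finset.subset_univ {i, i'})]
      · rw [Finset.sum_pair hii]
      · intro a _ ha
        simp only [Finset.mem_insert, Finset.mem_singleton, not_or] at ha
        exact Finset.sum_eq_zero fun b _ => hGout a ha.1 ha.2 b
    have hinner : ∀ a, ∑ b, G a b = G a j + G a j' := by
      intro a
      rw [← Finset.sum_subset (Finset.subset_univ {j, j'})]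
      · rw [Finset.sum_pair hjj]
      · intro b _ hb
        simp only [Finset.mem_insert, Finset.mem_singleton, not_or] at hb
        exact hGoutb a b hb.1 hb.2
    rw [houter, hinner i, hinner i']
    have e1 : G i j = psi (d i j + t) - psi (d i j) := by
      simp only [hGdef, pert, rr_fst]
      norm_num
    have e2 : G i j' = psi (d i j' - t) - psi (d i j') := by
      simp only [hGdef, pert, rr_fst, rr_snd hjj]
      norm_num
      rw [← sub_eq_add_neg]
    have e3 : G i' j = psi (d i' j - t) - psi (d i' j) := by
      simp only [hGdef, pert, rr_fst, rr_snd hii]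
      norm_num
      rw [← sub_eq_add_neg]
    have e4 : G i' j' = psi (d i' j' + t) - psi (d i' j') := by
      simp only [hGdef, pert, rr_snd hii, rr_snd hjj]
      norm_num
    rw [e1, e2, e3, e4]; ring
  unfold obj
  rw [hlin, hent]
  ring

lemma gibbs {n : ℕ} (hn : 0 < n) {γ N : ℝ} (hγ : 0 < γ) (hN : 0 < N)
    (c d : Fin n → Fin n → ℝ) (hd : ∀ i j, 0 ≤ d i j)
    (hsum : ∑ i, ∑ j, d i j = N) :
    -((N / γ) * Real.log ((1 / N) * ∑ i, ∑ j, Real.exp (-γ * c i j)))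
      ≤ ∑ i, ∑ j, d i j * c i j + (1 / γ) * ∑ i, ∑ j, d i j * Real.log (d i j) := by
  have hne : (Finset.univ : Finset (Fin n)).Nonempty := by
    haveI : Nonempty (Fin n) := ⟨⟨0, hn⟩⟩
    exact Finset.univ_nonempty
  set Z := ∑ i, ∑ j, Real.exp (-γ * c i j) with hZdef
  have hZ : 0 < Z := by
    apply Finset.sum_pos (fun i _ => Finset.sum_pos (fun j _ => Real.exp_pos _) hne) hne
  set q : Fin n → Fin n → ℝ := fun i j => N / Z * Real.exp (-γ * c i j) with hqdef
  have hq : ∀ i j, 0 < q i j := fun i j => by positivity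
  have hqsum : ∑ i, ∑ j, q i j = N := by
    simp only [hqdef, ← Finset.mul_sum]
    rw [← hZdef]
    field_simp
  have hlogq : ∀ i j, Real.log (q i j) = Real.log N - Real.log Z + (-γ * c i j) := by
    intro i j
    rw [hqdef]
    rw [Real.log_mul (by positivity) (ne_of_gt (Real.exp_pos _)),
      Real.log_div (ne_of_gt hN) (ne_of_gt hZ), Real.log_exp]
  have key : ∑ i, ∑ j, (d i j - q i j)
      ≤ ∑ i, ∑ j, (d i j * Real.log (d i j) - d i j * Real.log (q i j)) := by
    apply Finset.sum_le_sum
    intro i _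
    apply Finset.sum_le_sum
    intro j _
    exact ent_lb (hd i j) (hq i j)
  have hlhs : ∑ i, ∑ j, (d i j - q i j) = 0 := by
    simp only [Finset.sum_sub_distrib, hsum, hqsum, sub_self]
  rw [hlhs] at key
  have key2 : ∑ i, ∑ j, d i j * Real.log (q i j) ≤ ∑ i, ∑ j, d i j * Real.log (d i j) := by
    have := key
    simp only [Finset.sum_sub_distrib] at this
    linarith
  have hexp : ∑ i, ∑ j, d i j * Real.log (q i j)
      = N * (Real.log N - Real.log Z) - γ * ∑ i, ∑ j, d i j * c i j := by
    have : ∀ i j, d i j * Real.log (q i j)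
        = d i j * (Real.log N - Real.log Z) - γ * (d i j * c i j) := by
      intro i j; rw [hlogq i j]; ring
    simp only [this, Finset.sum_sub_distrib, ← Finset.sum_mul, ← Finset.mul_sum, hsum]
  rw [hexp] at key2
  have hlog : Real.log ((1 / N) * Z) = Real.log Z - Real.log N := by
    rw [Real.log_mul (by positivity) (ne_of_gt hZ), one_div, Real.log_inv]
    ring
  rw [hlog]
  have h1γ : (0:ℝ) < 1 / γ := by positivity
  have := mul_le_mul_of_nonneg_left key2 (le_of_lt h1γ)
  have hγne : γ ≠ 0 := ne_of_gt hγ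
  have hrw : 1 / γ * (N * (Real.log N - Real.log Z) - γ * ∑ i, ∑ j, d i j * c i j)
      = N / γ * (Real.log N - Real.log Z) - ∑ i, ∑ j, d i j * c i j := by
    field_simp
  rw [hrw] at this
  linarith

lemma expand {n : ℕ} (T d : Fin n → Fin n → ℝ) (l w lamL lamW : Fin n → ℝ)
    (hrow : ∀ i, ∑ j, d i j = l i) (hcol : ∀ j, ∑ i, d i j = w j) :
    ∑ i, ∑ j, d i j * (T i j + lamL i + lamW j)
      = ∑ i, ∑ j, d i j * T i j + ∑ i, lamL i * l i + ∑ j, lamW j * w j := by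
  have h1 : ∀ i j, d i j * (T i j + lamL i + lamW j)
      = d i j * T i j + d i j * lamL i + d i j * lamW j := by intros; ring
  simp only [h1, Finset.sum_add_distrib]
  congr 1
  · congr 1
    apply Finset.sum_congr rfl
    intro i _
    rw [← Finset.sum_mul, hrow i]; ring
  · rw [Finset.sum_comm]
    apply Finset.sum_congr rfl
    intro j _
    rw [← Finset.sum_mul, hcol j]; ring

lemma hasDerivAt_psi {x : ℝ} (hx : x ≠ 0) : HasDerivAt psi (Real.log x + 1) x :=
  Real.hasDerivAt_mul_log hx

end OTDual

open OTDual

/-- Strong duality for the entropy-regularized trip distribution (optimal transport)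
problem with a tautological normalization constraint. -/
theorem stmt3 (n : ℕ) (hn : 0 < n) (γ : ℝ) (hγ : 0 < γ)
    (l w : Fin n → ℝ) (hl : ∀ i, 0 ≤ l i) (hw : ∀ j, 0 ≤ w j)
    (N : ℝ) (hN : 0 < N) (hlN : ∑ i, l i = N) (hwN : ∑ j, w j = N)
    (T : Fin n → Fin n → ℝ) :
    sInf {v : ℝ | ∃ d : Fin n → Fin n → ℝ, (∀ i j, 0 ≤ d i j) ∧
        (∀ i, ∑ j, d i j = l i) ∧ (∀ j, ∑ i, d i j = w j) ∧
        v = ∑ i, ∑ j, d i j * T i j + (1 / γ) * ∑ i, ∑ j, d i j * Real.log (d i j)}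
    = sSup {v : ℝ | ∃ lamL lamW : Fin n → ℝ,
        v = -((N / γ) * Real.log ((1 / N) *
              ∑ i, ∑ j, Real.exp (-γ * (T i j + lamL i + lamW j)))
            + ∑ i, lamL i * l i + ∑ j, lamW j * w j)} := by
  classical
  set K : Set (Fin n → Fin n → ℝ) :=
    {d | (∀ i j, 0 ≤ d i j) ∧ (∀ i, ∑ j, d i j = l i) ∧ (∀ j, ∑ i, d i j = w j)} with hKdef
  -- K is nonempty
  have hKne : K.Nonempty := by
    refine ⟨fun i j => l i * w j / N, fun i j => div_nonneg (mul_nonneg (hl i) (hw j)) hN.le, ?_, ?_⟩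
    · intro i
      rw [← Finset.sum_div, ← Finset.mul_sum, hwN, mul_div_assoc, div_self (ne_of_gt hN), mul_one]
    · intro j
      rw [← Finset.sum_div, ← Finset.sum_mul, hlN, mul_comm, mul_div_assoc, div_self (ne_of_gt hN), mul_one]
  -- K is compact
  have hKcomp : IsCompact K := by
    have hCcomp : IsCompact (Set.univ.pi fun _ : Fin n => Set.univ.pi fun _ : Fin n => Set.Icc (0:ℝ) N) :=
      isCompact_univ_pi fun _ => isCompact_univ_pi fun _ => isCompact_Icc
    apply hCcomp.of_isClosed_subset
    · have h1 : IsClosed {d : Fin n → Fin n → ℝ | ∀ i j, 0 ≤ d i j} := by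
        have : {d : Fin n → Fin n → ℝ | ∀ i j, 0 ≤ d i j} = ⋂ i, ⋂ j, {d | 0 ≤ d i j} := by
          ext; simp [Set.mem_iInter]
        rw [this]
        exact isClosed_iInter fun i => isClosed_iInter fun j =>
          isClosed_le continuous_const ((continuous_apply j).comp (continuous_apply i))
      have h2 : IsClosed {d : Fin n → Fin n → ℝ | ∀ i, ∑ j, d i j = l i} := by
        have : {d : Fin n → Fin n → ℝ | ∀ i, ∑ j, d i j = l i} = ⋂ i, {d | ∑ j, d i j = l i} := by
          ext; simp [Set.mem_iInter]
        rw [this]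
        exact isClosed_iInter fun i =>
          isClosed_eq (continuous_finset_sum _ fun j _ => (continuous_apply j).comp (continuous_apply i))
            continuous_const
      have h3 : IsClosed {d : Fin n → Fin n → ℝ | ∀ j, ∑ i, d i j = w j} := by
        have : {d : Fin n → Fin n → ℝ | ∀ j, ∑ i, d i j = w j} = ⋂ j, {d | ∑ i, d i j = w j} := by
          ext; simp [Set.mem_iInter]
        rw [this]
        exact isClosed_iInter fun j =>
          isClosed_eq (continuous_finset_sum _ fun i _ => (continuous_apply j).comp (continuous_apply i))
            continuous_const
      have : K = {d : Fin n → Fin n → ℝ | ∀ i j, 0 ≤ d i j}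
          ∩ ({d | ∀ i, ∑ j, d i j = l i} ∩ {d | ∀ j, ∑ i, d i j = w j}) := by
        ext d; simp only [hKdef, Set.mem_setOf_eq, Set.mem_inter_iff, and_assoc]
      rw [this]
      exact h1.inter (h2.inter h3)
    · intro d hd
      simp only [Set.mem_pi, Set.mem_univ, forall_true_left, Set.mem_Icc]
      intro i j
      refine ⟨hd.1 i j, ?_⟩
      calc d i j ≤ ∑ j', d i j' := Finset.single_le_sum (fun j' _ => hd.1 i j') (Finset.mem_univ j)
        _ = l i := hd.2.1 i
        _ ≤ ∑ i', l i' := Finset.single_le_sum (fun i' _ => hl i') (Finset.mem_univ i)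
        _ = N := hlN
  -- obj is continuous
  have hcont : Continuous (obj γ T : (Fin n → Fin n → ℝ) → ℝ) := by
    unfold OTDual.obj
    apply Continuous.add
    · exact continuous_finset_sum _ fun i _ => continuous_finset_sum _ fun j _ =>
        by fun_prop
    · exact continuous_const.mul <| continuous_finset_sum _ fun i _ =>
        continuous_finset_sum _ fun j _ =>
          Real.continuous_mul_log.comp ((continuous_apply j).comp (continuous_apply i))
  obtain ⟨d, hdK, hdmin'⟩ := hKcomp.exists_isMinOn hKne hcont.continuousOn
  have hdmin : ∀ e ∈ K, obj γ T d ≤ obj γ T e := fun e he => isMinOn_iff.mp hdmin' e he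
  obtain ⟨hd0, hdrow, hdcol⟩ := hdK
  -- basic bounds
  have hdlbr : ∀ i j, d i j ≤ l i := fun i j => by
    rw [← hdrow i]
    exact Finset.single_le_sum (fun j' _ => hd0 i j') (Finset.mem_univ j)
  have hdlbc : ∀ i j, d i j ≤ w j := fun i j => by
    rw [← hdcol j]
    exact Finset.single_le_sum (fun i' _ => hd0 i' j) (Finset.mem_univ i)
  have hlleN : ∀ i, l i ≤ N := fun i => by
    rw [← hlN]; exact Finset.single_le_sum (fun i' _ => hl i') (Finset.mem_univ i)
  have hub : ∀ i j, d i j ≤ N := fun i j => le_trans (hdlbr i j) (hlleN i)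
  have hzr : ∀ i j, ¬ 0 < l i → d i j = 0 := fun i j h =>
    le_antisymm (le_trans (hdlbr i j) (not_lt.mp h)) (hd0 i j)
  have hzc : ∀ i j, ¬ 0 < w j → d i j = 0 := fun i j h =>
    le_antisymm (le_trans (hdlbc i j) (not_lt.mp h)) (hd0 i j)
  have hdsumN : ∑ i, ∑ j, d i j = N := by
    simp only [hdrow]; exact hlN
  -- positivity of the minimizer on the support
  have hpos : ∀ a b, 0 < l a → 0 < w b → 0 < d a b := by
    intro a b hla hwb
    by_contra hcon
    have hdab : d a b = 0 := le_antisymm (not_lt.mp hcon) (hd0 a b)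
    obtain ⟨j', hj'⟩ : ∃ j', 0 < d a j' := by
      by_contra h
      push_neg at h
      have h2 : ∑ j, d a j ≤ 0 := Finset.sum_nonpos fun j _ => h j
      rw [hdrow a] at h2; linarith
    obtain ⟨i', hi'⟩ : ∃ i', 0 < d i' b := by
      by_contra h
      push_neg at h
      have h2 : ∑ i, d i b ≤ 0 := Finset.sum_nonpos fun i _ => h i
      rw [hdcol b] at h2; linarith
    have hii : a ≠ i' := by
      intro h; rw [← h, hdab] at hi'; exact lt_irrefl 0 hi'
    have hjj : b ≠ j' := by
      intro h; rw [← h, hdab] at hj'; exact lt_irrefl 0 hj'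
    set LT := T a b + T i' j' - T a j' - T i' b with hLT
    set C := Real.log (N + 1) + 1 + |Real.log (d a j')| + |Real.log (d i' b)| with hC
    set t := min (min (d a j') (d i' b) / 2) (min 1 (Real.exp (-γ * LT - C - 1))) with htdef
    have hmv : 0 < min (d a j') (d i' b) := lt_min hj' hi'
    have ht0 : 0 < t := lt_min (by linarith) (lt_min one_pos (Real.exp_pos _))
    have htu : t < d a j' := by
      have h1 : min (d a j') (d i' b) / 2 < d a j' := by
        have := min_le_left (d a j') (d i' b); linarith
      exact lt_of_le_of_lt (min_le_left _ _) h1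
    have htv : t < d i' b := by
      have h1 : min (d a j') (d i' b) / 2 < d i' b := by
        have := min_le_right (d a j') (d i' b); linarith
      exact lt_of_le_of_lt (min_le_left _ _) h1
    have ht1 : t ≤ 1 := le_trans (min_le_right _ _) (min_le_left _ _)
    have hlogt : Real.log t ≤ -γ * LT - C - 1 := by
      have h1 : t ≤ Real.exp (-γ * LT - C - 1) := le_trans (min_le_right _ _) (min_le_right _ _)
      calc Real.log t ≤ Real.log (Real.exp (-γ * LT - C - 1)) := Real.log_le_log ht0 h1
        _ = -γ * LT - C - 1 := Real.log_exp _
    have hfeas : pert d t a i' b j' ∈ K := by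
      simp only [hKdef, Set.mem_setOf_eq]
      refine ⟨?_, fun p => by rw [pert_row d t hjj p, hdrow p],
        fun q => by rw [pert_col d t hii q, hdcol q]⟩
      have pe1 : pert d t a i' b j' a b = d a b + t := by
        unfold pert; rw [rr_fst a i', rr_fst b j']; ring
      have pe2 : pert d t a i' b j' a j' = d a j' - t := by
        unfold pert; rw [rr_fst a i', rr_snd hjj]; ring
      have pe3 : pert d t a i' b j' i' b = d i' b - t := by
        unfold pert; rw [rr_snd hii, rr_fst b j']; ring
      have pe4 : pert d t a i' b j' i' j' = d i' j' + t := by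
        unfold pert; rw [rr_snd hii, rr_snd hjj]; ring
      intro p q
      by_cases hp : p = a ∨ p = i'
      · by_cases hq : q = b ∨ q = j'
        · rcases hp with rfl | rfl <;> rcases hq with rfl | rfl
          · rw [pe1]; linarith
          · rw [pe2]; linarith
          · rw [pe3]; linarith
          · rw [pe4]; linarith [hd0 p q]
        · push_neg at hq
          rw [pert_apply_off d t p q (Or.inr hq)]
          exact hd0 p q
      · push_neg at hp
        rw [pert_apply_off d t p q (Or.inl hp)]
        exact hd0 p q
    have hge : obj γ T d ≤ obj γ T (pert d t a i' b j') := hdmin _ hfeas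
    have hdec := obj_pert γ T d hii hjj t
    have hB1 : psi (d a b + t) - psi (d a b) = t * Real.log t := by
      rw [hdab]; simp [psi]
    have hB2 : psi (d i' j' + t) - psi (d i' j') ≤ t * (Real.log (N + 1) + 1) := by
      refine le_trans (psi_incr_bound (hd0 i' j') ht0) ?_
      have hlog : Real.log (d i' j' + t) ≤ Real.log (N + 1) :=
        Real.log_le_log (by linarith [hd0 i' j']) (by linarith [hub i' j'])
      exact mul_le_mul_of_nonneg_left (by linarith) ht0.le
    have hB3 : psi (d a j' - t) - psi (d a j') ≤ t * |Real.log (d a j')| :=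
      psi_decr_bound hj' ht0 htu
    have hB4 : psi (d i' b - t) - psi (d i' b) ≤ t * |Real.log (d i' b)| :=
      psi_decr_bound hi' ht0 htv
    have hsum : (psi (d a b + t) - psi (d a b)) + (psi (d i' j' + t) - psi (d i' j'))
        + (psi (d a j' - t) - psi (d a j')) + (psi (d i' b - t) - psi (d i' b))
        ≤ t * Real.log t + t * (Real.log (N + 1) + 1)
          + t * |Real.log (d a j')| + t * |Real.log (d i' b)| := by linarith
    have hmono := mul_le_mul_of_nonneg_left hsum (le_of_lt (by positivity : (0:ℝ) < 1/γ))
    have hid : (1/γ) * (t * Real.log t + t * (Real.log (N + 1) + 1)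
        + t * |Real.log (d a j')| + t * |Real.log (d i' b)|)
        = t / γ * (Real.log t + C) := by
      rw [hC]; field_simp; ring
    have hfin : t / γ * (Real.log t + C) ≤ t / γ * (-γ * LT - 1) :=
      mul_le_mul_of_nonneg_left (by linarith) (by positivity)
    have hid2 : t / γ * (-γ * LT - 1) = -(t * LT) - t / γ := by
      field_simp
    have htγ : 0 < t / γ := by positivity
    rw [hid] at hmono
    rw [hid2] at hfin
    linarith [hge, hdec.le, hdec.ge]
  -- four point property
  have hfour : ∀ i i' j j', 0 < l i → 0 < l i' → 0 < w j → 0 < w j' →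
      T i j + T i' j' + (1/γ) * (Real.log (d i j) + Real.log (d i' j'))
        = T i j' + T i' j + (1/γ) * (Real.log (d i j') + Real.log (d i' j)) := by
    intro i i' j j' h1 h2 h3 h4
    by_cases hii : i = i'
    · subst hii; ring
    by_cases hjj : j = j'
    · subst hjj; ring
    have p1 : 0 < d i j := hpos _ _ h1 h3
    have p2 : 0 < d i' j' := hpos _ _ h2 h4
    have p3 : 0 < d i j' := hpos _ _ h1 h4
    have p4 : 0 < d i' j := hpos _ _ h2 h3
    set δ := min (min (d i j) (d i' j')) (min (d i j') (d i' j)) with hδdef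
    have hδ : 0 < δ := lt_min (lt_min p1 p2) (lt_min p3 p4)
    have hδ1 : δ ≤ d i j := le_trans (min_le_left _ _) (min_le_left _ _)
    have hδ2 : δ ≤ d i' j' := le_trans (min_le_left _ _) (min_le_right _ _)
    have hδ3 : δ ≤ d i j' := le_trans (min_le_right _ _) (min_le_left _ _)
    have hδ4 : δ ≤ d i' j := le_trans (min_le_right _ _) (min_le_right _ _)
    have pe1 : ∀ t, pert d t i i' j j' i j = d i j + t := by
      intro t; unfold pert; rw [rr_fst i i', rr_fst j j']; ring
    have pe2 : ∀ t, pert d t i i' j j' i j' = d i j' - t := by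
      intro t; unfold pert; rw [rr_fst i i', rr_snd hjj]; ring
    have pe3 : ∀ t, pert d t i i' j j' i' j = d i' j - t := by
      intro t; unfold pert; rw [rr_snd hii, rr_fst j j']; ring
    have pe4 : ∀ t, pert d t i i' j j' i' j' = d i' j' + t := by
      intro t; unfold pert; rw [rr_snd hii, rr_snd hjj]; ring
    have hloc : IsLocalMin (fun t => obj γ T (pert d t i i' j j')) 0 := by
      have hmem : Set.Ioo (-δ) δ ∈ nhds (0:ℝ) := Ioo_mem_nhds (by linarith) hδ
      filter_upwards [hmem] with t ht
      obtain ⟨ht1, ht2⟩ := ht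
      show obj γ T (pert d (0:ℝ) i i' j j') ≤ obj γ T (pert d t i i' j j')
      have h0 : pert d (0:ℝ) i i' j j' = d := by
        funext p q; unfold pert; ring
      rw [h0]
      apply hdmin
      simp only [hKdef, Set.mem_setOf_eq]
      refine ⟨?_, fun p => by rw [pert_row d t hjj p, hdrow p],
        fun q => by rw [pert_col d t hii q, hdcol q]⟩
      intro p q
      by_cases hp : p = i ∨ p = i'
      · by_cases hq : q = j ∨ q = j'
        · rcases hp with rfl | rfl <;> rcases hq with rfl | rfl
          · rw [pe1]; linarith
          · rw [pe2]; linarith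
          · rw [pe3]; linarith
          · rw [pe4]; linarith
        · push_neg at hq
          rw [pert_apply_off d t p q (Or.inr hq)]
          exact hd0 p q
      · push_neg at hp
        rw [pert_apply_off d t p q (Or.inl hp)]
        exact hd0 p q
    have hfun : (fun t => obj γ T (pert d t i i' j j')) = fun t => obj γ T d
        + t * (T i j + T i' j' - T i j' - T i' j)
        + (1/γ) * ((psi (d i j + t) - psi (d i j)) + (psi (d i' j' + t) - psi (d i' j'))
          + (psi (d i j' - t) - psi (d i j')) + (psi (d i' j - t) - psi (d i' j))) :=
      funext fun t => obj_pert γ T d hii hjj t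
    rw [hfun] at hloc
    have A1 : HasDerivAt (fun t : ℝ => psi (d i j + t)) ((Real.log (d i j) + 1) * 1) 0 := by
      have hg : HasDerivAt (fun t : ℝ => d i j + t) 1 0 := (hasDerivAt_id 0).const_add _
      have hψ : HasDerivAt psi (Real.log (d i j) + 1) (d i j + 0) := by
        rw [add_zero]; exact hasDerivAt_psi (ne_of_gt p1)
      exact hψ.comp 0 hg
    have A2 : HasDerivAt (fun t : ℝ => psi (d i' j' + t)) ((Real.log (d i' j') + 1) * 1) 0 := by
      have hg : HasDerivAt (fun t : ℝ => d i' j' + t) 1 0 := (hasDerivAt_id 0).const_add _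
      have hψ : HasDerivAt psi (Real.log (d i' j') + 1) (d i' j' + 0) := by
        rw [add_zero]; exact hasDerivAt_psi (ne_of_gt p2)
      exact hψ.comp 0 hg
    have A3 : HasDerivAt (fun t : ℝ => psi (d i j' - t)) ((Real.log (d i j') + 1) * (-1)) 0 := by
      have hg : HasDerivAt (fun t : ℝ => d i j' - t) (-1) 0 := (hasDerivAt_id 0).const_sub _
      have hψ : HasDerivAt psi (Real.log (d i j') + 1) (d i j' - 0) := by
        rw [sub_zero]; exact hasDerivAt_psi (ne_of_gt p3)
      exact hψ.comp 0 hg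
    have A4 : HasDerivAt (fun t : ℝ => psi (d i' j - t)) ((Real.log (d i' j) + 1) * (-1)) 0 := by
      have hg : HasDerivAt (fun t : ℝ => d i' j - t) (-1) 0 := (hasDerivAt_id 0).const_sub _
      have hψ : HasDerivAt psi (Real.log (d i' j) + 1) (d i' j - 0) := by
        rw [sub_zero]; exact hasDerivAt_psi (ne_of_gt p4)
      exact hψ.comp 0 hg
    have hD : HasDerivAt (fun t => obj γ T d
        + t * (T i j + T i' j' - T i j' - T i' j)
        + (1/γ) * ((psi (d i j + t) - psi (d i j)) + (psi (d i' j' + t) - psi (d i' j'))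
          + (psi (d i j' - t) - psi (d i j')) + (psi (d i' j - t) - psi (d i' j))))
        (1 * (T i j + T i' j' - T i j' - T i' j)
          + (1/γ) * (((Real.log (d i j) + 1) * 1 + (Real.log (d i' j') + 1) * 1)
            + (Real.log (d i j') + 1) * (-1) + (Real.log (d i' j) + 1) * (-1))) 0 := by
      exact (((hasDerivAt_id 0).mul_const _).const_add (obj γ T d)).add
        (HasDerivAt.const_mul (1/γ) ((((A1.sub_const _).add (A2.sub_const _)).add
          (A3.sub_const _)).add (A4.sub_const _)))
    have hzero := hloc.hasDerivAt_eq_zero hD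
    linear_combination hzero
  -- choose support base point
  obtain ⟨i0, hi0⟩ : ∃ i, 0 < l i := by
    by_contra h
    push_neg at h
    have : ∑ i, l i ≤ 0 := Finset.sum_nonpos fun i _ => h i
    rw [hlN] at this; linarith
  obtain ⟨j0, hj0⟩ : ∃ j, 0 < w j := by
    by_contra h
    push_neg at h
    have : ∑ j, w j ≤ 0 := Finset.sum_nonpos fun j _ => h j
    rw [hwN] at this; linarith
  set g : Fin n → Fin n → ℝ := fun i j => T i j + (1/γ) * Real.log (d i j) with hgdef
  set lamL' : Fin n → ℝ := fun i => g i0 j0 - g i j0 with hlamL'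
  set lamW' : Fin n → ℝ := fun j => -(g i0 j) with hlamW'
  have hP1 : ∀ i j, 0 < l i → 0 < w j →
      T i j + lamL' i + lamW' j = -(1/γ) * Real.log (d i j) := by
    intro i j hi hj
    have h4 := hfour i i0 j j0 hi hi0 hj hj0
    simp only [hlamL', hlamW', hgdef]
    linear_combination h4
  have hP1exp : ∀ i j, 0 < l i → 0 < w j →
      Real.exp (-γ * (T i j + lamL' i + lamW' j)) = d i j := by
    intro i j hi hj
    rw [hP1 i j hi hj]
    have h : -γ * (-(1/γ) * Real.log (d i j)) = Real.log (d i j) := by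
      field_simp
    rw [h, Real.exp_log (hpos i j hi hj)]
  have hP2 : obj γ T d = -(∑ i, lamL' i * l i + ∑ j, lamW' j * w j) := by
    have hA : obj γ T d = ∑ i, ∑ j, (d i j * T i j + (1/γ) * (d i j * Real.log (d i j))) := by
      unfold OTDual.obj
      simp only [Finset.mul_sum]
      rw [← Finset.sum_add_distrib]
      apply Finset.sum_congr rfl
      intro i _
      rw [← Finset.sum_add_distrib]
    have hB : ∀ i j, d i j * T i j + (1/γ) * (d i j * Real.log (d i j))
        = d i j * ((fun _ _ => (0:ℝ)) i j + (-(lamL' i)) + (-(lamW' j))) := by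
      intro i j
      rcases eq_or_lt_of_le (hd0 i j) with h | h
      · rw [← h]; simp
      · have hi : 0 < l i := lt_of_lt_of_le h (hdlbr i j)
        have hj : 0 < w j := lt_of_lt_of_le h (hdlbc i j)
        have hp := hP1 i j hi hj
        simp only
        linear_combination (d i j) * hp
    rw [hA, Finset.sum_congr rfl fun i _ => Finset.sum_congr rfl fun j _ => hB i j,
      expand (fun _ _ => (0:ℝ)) d l w (fun i => -(lamL' i)) (fun j => -(lamW' j)) hdrow hdcol]
    simp only [mul_zero, Finset.sum_const_zero, zero_add, neg_mul, Finset.sum_neg_distrib]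
    ring
  -- the dual family and its limit
  set lamLM : ℝ → Fin n → ℝ := fun M i => if 0 < l i then lamL' i else M with hlamLM
  set lamWM : ℝ → Fin n → ℝ := fun M j => if 0 < w j then lamW' j else M with hlamWM
  set dv : ℝ → ℝ := fun M =>
    -((N / γ) * Real.log ((1 / N) *
        ∑ i, ∑ j, Real.exp (-γ * (T i j + lamLM M i + lamWM M j)))
      + ∑ i, lamLM M i * l i + ∑ j, lamWM M j * w j) with hdvdef
  have hsL : ∀ M : ℝ, ∑ i, lamLM M i * l i = ∑ i, lamL' i * l i := by
    intro M
    apply Finset.sum_congr rfl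
    intro i _
    by_cases hi : 0 < l i
    · simp only [hlamLM, if_pos hi]
    · have h0 : l i = 0 := le_antisymm (not_lt.mp hi) (hl i)
      rw [h0, mul_zero, mul_zero]
  have hsW : ∀ M : ℝ, ∑ j, lamWM M j * w j = ∑ j, lamW' j * w j := by
    intro M
    apply Finset.sum_congr rfl
    intro j _
    by_cases hj : 0 < w j
    · simp only [hlamWM, if_pos hj]
    · have h0 : w j = 0 := le_antisymm (not_lt.mp hj) (hw j)
      rw [h0, mul_zero, mul_zero]
  have hZtend : Filter.Tendsto
      (fun M => ∑ i, ∑ j, Real.exp (-γ * (T i j + lamLM M i + lamWM M j)))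
      Filter.atTop (nhds N) := by
    have hNd : N = ∑ i, ∑ j, d i j := hdsumN.symm
    rw [hNd]
    apply tendsto_finset_sum
    intro i _
    apply tendsto_finset_sum
    intro j _
    by_cases hi : 0 < l i
    · by_cases hj : 0 < w j
      · have heq : (fun M : ℝ => Real.exp (-γ * (T i j + lamLM M i + lamWM M j)))
            = fun _ => d i j := by
          funext M
          simp only [hlamLM, hlamWM, if_pos hi, if_pos hj]
          exact hP1exp i j hi hj
        rw [heq]
        exact tendsto_const_nhds
      · rw [hzc i j hj]
        refine Real.tendsto_exp_atBot.comp ?_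
        have heq : (fun M : ℝ => -γ * (T i j + lamLM M i + lamWM M j))
            = fun M => -γ * M + (-γ * (T i j + lamL' i)) := by
          funext M
          simp only [hlamLM, hlamWM, if_pos hi, if_neg hj]
          ring
        rw [heq]
        exact tendsto_atBot_add_const_right _ _
          (tendsto_id.const_mul_atTop_of_neg (by linarith))
    · by_cases hj : 0 < w j
      · rw [hzr i j hi]
        refine Real.tendsto_exp_atBot.comp ?_
        have heq : (fun M : ℝ => -γ * (T i j + lamLM M i + lamWM M j))
            = fun M => -γ * M + (-γ * (T i j + lamW' j)) := by
          funext M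
          simp only [hlamLM, hlamWM, if_neg hi, if_pos hj]
          ring
        rw [heq]
        exact tendsto_atBot_add_const_right _ _
          (tendsto_id.const_mul_atTop_of_neg (by linarith))
      · rw [hzr i j hi]
        refine Real.tendsto_exp_atBot.comp ?_
        have heq : (fun M : ℝ => -γ * (T i j + lamLM M i + lamWM M j))
            = fun M => (-(2*γ)) * M + (-γ * T i j) := by
          funext M
          simp only [hlamLM, hlamWM, if_neg hi, if_neg hj]
          ring
        rw [heq]
        exact tendsto_atBot_add_const_right _ _
          (tendsto_id.const_mul_atTop_of_neg (by linarith))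
  have hdvtend : Filter.Tendsto dv Filter.atTop (nhds (obj γ T d)) := by
    have hfeq : dv = fun M => -((N / γ) * Real.log ((1 / N) *
        (∑ i, ∑ j, Real.exp (-γ * (T i j + lamLM M i + lamWM M j))))
        + (∑ i, lamL' i * l i + ∑ j, lamW' j * w j)) := by
      funext M
      rw [hdvdef]
      simp only [hsL M, hsW M]
      ring
    have hval : -((N / γ) * Real.log ((1 / N) * N)
        + (∑ i, lamL' i * l i + ∑ j, lamW' j * w j)) = obj γ T d := by
      rw [one_div, inv_mul_cancel₀ (ne_of_gt hN), Real.log_one, mul_zero, zero_add, hP2]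
    rw [hfeq, ← hval]
    apply Filter.Tendsto.neg
    apply Filter.Tendsto.add_const
    apply Filter.Tendsto.const_mul
    exact (hZtend.const_mul (1 / N)).log (by positivity)
  -- weak duality
  have hweak : ∀ lamL lamW : Fin n → ℝ,
      -((N / γ) * Real.log ((1 / N) *
          ∑ i, ∑ j, Real.exp (-γ * (T i j + lamL i + lamW j)))
        + ∑ i, lamL i * l i + ∑ j, lamW j * w j) ≤ obj γ T d := by
    intro lamL lamW
    have hG := gibbs hn hγ hN (fun i j => T i j + lamL i + lamW j) d hd0 hdsumN
    rw [expand T d l w lamL lamW hdrow hdcol] at hG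
    unfold OTDual.obj
    linarith
  -- assemble
  have hLeast : IsLeast {v : ℝ | ∃ d : Fin n → Fin n → ℝ, (∀ i j, 0 ≤ d i j) ∧
      (∀ i, ∑ j, d i j = l i) ∧ (∀ j, ∑ i, d i j = w j) ∧
      v = ∑ i, ∑ j, d i j * T i j + (1 / γ) * ∑ i, ∑ j, d i j * Real.log (d i j)}
      (obj γ T d) := by
    constructor
    · exact ⟨d, hd0, hdrow, hdcol, rfl⟩
    · rintro v ⟨e, he0, herow, hecol, rfl⟩
      exact hdmin e ⟨he0, herow, hecol⟩
  have hLUB : IsLUB {v : ℝ | ∃ lamL lamW : Fin n → ℝ,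
      v = -((N / γ) * Real.log ((1 / N) *
            ∑ i, ∑ j, Real.exp (-γ * (T i j + lamL i + lamW j)))
          + ∑ i, lamL i * l i + ∑ j, lamW j * w j)} (obj γ T d) := by
    constructor
    · rintro v ⟨lamL, lamW, rfl⟩
      exact hweak lamL lamW
    · intro u hu
      refine le_of_tendsto hdvtend (Filter.Eventually.of_forall fun M => ?_)
      exact hu ⟨lamLM M, lamWM M, rfl⟩
  rw [hLeast.csInf_eq, hLUB.csSup_eq ⟨dv 0, lamLM 0, lamWM 0, rfl⟩]
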